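/- Let n > 1 and let φ ∈ C²(ℝ) be a classical solution of φ'' + ( e^{2ζ}/2 − (n+3)/(n−1) ) φ' + (2(n+1)/(n−1)²) φ (1 − φ^{n−1}) = 0 on ℝ with 0 < φ(ζ) < 1 for all ζ ∈ ℝ, lim_{ζ→−∞} φ(ζ) = 1 and lim_{ζ→+∞} φ(ζ) = 0. Then φ is strictly decreasing on ℝ; in particular φ'(ζ) < 0 for every ζ, since at any critical point ζ₀ the equation forces φ''(ζ₀) = −(2(n+1)/(n−1)²) φ(ζ₀)(1 − φ(ζ₀)^{n−1}) < 0. -/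

import Mathlib

open Real Filter Set

/-- Monotonicity of the self-similar profile: any classical `C²` solution of the
profile equation in the logarithmic variable with `0 < φ < 1`, `φ(-∞) = 1` and
`φ(+∞) = 0` is strictly decreasing, with `φ' < 0` everywhere. -/
theorem profile_strictly_decreasing (n : ℝ) (hn : 1 < n)
    (φ : ℝ → ℝ) (hreg : ContDiff ℝ 2 φ)
    (hode : ∀ ζ : ℝ, deriv (deriv φ) ζ +
      (Real.exp (2 * ζ) / 2 - (n + 3) / (n - 1)) * deriv φ ζ +
      2 * (n + 1) / (n - 1) ^ 2 * φ ζ * (1 - φ ζ ^ (n - 1)) = 0)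
    (hrange : ∀ ζ : ℝ, 0 < φ ζ ∧ φ ζ < 1)
    (hlim_bot : Tendsto φ atBot (nhds 1))
    (hlim_top : Tendsto φ atTop (nhds 0)) :
    StrictAnti φ ∧ ∀ ζ : ℝ, deriv φ ζ < 0 := by
  have hn1 : (0:ℝ) < n - 1 := by linarith
  -- basic regularity
  have hφdiff : Differentiable ℝ φ := hreg.differentiable (by norm_num)
  have hφcont : Continuous φ := hφdiff.continuous
  have h2 : ContDiff ℝ 1 (deriv φ) := by
    have : (2 : WithTop ℕ∞) = 1 + 1 := by norm_num
    rw [this, contDiff_succ_iff_deriv] at hreg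
    exact hreg.2.2
  have hgdiff : Differentiable ℝ (deriv φ) := h2.differentiable one_ne_zero
  -- at a critical point the second derivative is negative
  have hA : ∀ c, deriv φ c = 0 → deriv (deriv φ) c < 0 := by
    intro c hc
    have h := hode c
    rw [hc, mul_zero] at h
    have h1 : 0 < φ c := (hrange c).1
    have h2' : φ c ^ (n - 1) < 1 :=
      Real.rpow_lt_one h1.le (hrange c).2 hn1
    have h3 : 0 < 2 * (n + 1) / (n - 1) ^ 2 := by positivity
    nlinarith [mul_pos (mul_pos h3 h1) (sub_pos.mpr h2')]
  -- sign of deriv φ on both sides of a critical point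
  have hsign : ∀ c, deriv φ c = 0 → ∃ ε > 0,
      (∀ x, x ≠ c → |x - c| < ε → ((x < c → 0 < deriv φ x) ∧ (c < x → deriv φ x < 0))) := by
    intro c hc
    have hd : HasDerivAt (deriv φ) (deriv (deriv φ) c) c := (hgdiff c).hasDerivAt
    have hslope := hasDerivAt_iff_tendsto_slope.mp hd
    have hev : ∀ᶠ x in nhdsWithin c {c}ᶜ, slope (deriv φ) c x < 0 :=
      hslope.eventually (eventually_lt_nhds (hA c hc))
    rw [eventually_nhdsWithin_iff] at hev
    rw [Metric.eventually_nhds_iff] at hev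
    obtain ⟨ε, hε, hball⟩ := hev
    refine ⟨ε, hε, fun x hx hxc => ?_⟩
    have hs := hball (show dist x c < ε by rwa [Real.dist_eq]) hx
    rw [slope_def_field, hc, sub_zero, div_neg_iff] at hs
    constructor
    · intro hlt
      rcases hs with ⟨h1, h2⟩ | ⟨h1, h2⟩
      · exact h1
      · linarith
    · intro hlt
      rcases hs with ⟨h1, h2⟩ | ⟨h1, h2⟩
      · linarith
      · exact h1
  -- a critical point is a strict local maximum
  have hdec : ∀ c, deriv φ c = 0 → ∃ ε > 0, ∀ x, x ≠ c → |x - c| < ε → φ x < φ c := by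
    intro c hc
    obtain ⟨ε, hε, hs⟩ := hsign c hc
    refine ⟨ε, hε, fun x hx hxc => ?_⟩
    rcases lt_or_gt_of_ne hx with hlt | hgt
    · -- x < c, φ strictly increasing on [x, c]
      have : StrictMonoOn φ (Icc x c) := by
        apply strictMonoOn_of_deriv_pos (convex_Icc x c) hφcont.continuousOn
        intro y hy
        rw [interior_Icc] at hy
        have hyc : y ≠ c := ne_of_lt hy.2
        have : |y - c| < ε := by
          rw [abs_lt]; rw [abs_lt] at hxc
          constructor <;> nlinarith [hy.1, hy.2, hxc.1, hxc.2]
        exact (hs y hyc this).1 hy.2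
      exact this (left_mem_Icc.mpr hlt.le) (right_mem_Icc.mpr hlt.le) hlt
    · -- c < x, φ strictly decreasing on [c, x]
      have : StrictAntiOn φ (Icc c x) := by
        apply strictAntiOn_of_deriv_neg (convex_Icc c x) hφcont.continuousOn
        intro y hy
        rw [interior_Icc] at hy
        have hyc : y ≠ c := ne_of_gt hy.1
        have : |y - c| < ε := by
          rw [abs_lt]; rw [abs_lt] at hxc
          constructor <;> nlinarith [hy.1, hy.2, hxc.1, hxc.2]
        exact (hs y hyc this).2 hy.1
      exact this (left_mem_Icc.mpr hgt.le) (right_mem_Icc.mpr hgt.le) hgt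
  -- no critical point is a minimum over an interval containing it in its interior
  have hnomin : ∀ z w m, m ∈ Ioo z w → (∀ x ∈ Icc z w, φ m ≤ φ x) → False := by
    intro z w m hm hmin
    have hloc : IsLocalMin φ m := by
      have : Icc z w ∈ nhds m := Icc_mem_nhds hm.1 hm.2
      exact Filter.eventually_of_mem this hmin
    have hc := hloc.deriv_eq_zero
    obtain ⟨ε, hε, hd⟩ := hdec m hc
    have hwm : 0 < w - m := by linarith [hm.2]
    have hminpos : 0 < min ε (w - m) := lt_min hε hwm
    have hle1 : min ε (w - m) ≤ ε := min_le_left _ _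
    have hle2 : min ε (w - m) ≤ w - m := min_le_right _ _
    set x := m + min ε (w - m) / 2 with hx
    have hxm : m < x := by rw [hx]; linarith
    have hxw : x ≤ w := by rw [hx]; linarith
    have h1 : φ x < φ m := by
      apply hd x (ne_of_gt hxm)
      rw [hx, abs_lt]; constructor <;> linarith
    have h2 : φ m ≤ φ x := hmin x ⟨by linarith [hm.1], hxw⟩
    linarith
  -- from a point with positive derivative, find a strictly larger value to the right
  have hup : ∀ a b, a < b → 0 < deriv φ a → ∃ x, x ∈ Ioo a b ∧ φ a < φ x := by
    intro a b hab ha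
    have hd : HasDerivAt φ (deriv φ a) a := (hφdiff a).hasDerivAt
    have hslope := hasDerivAt_iff_tendsto_slope.mp hd
    have hev : ∀ᶠ x in nhdsWithin a {a}ᶜ, 0 < slope φ a x :=
      hslope.eventually (eventually_gt_nhds ha)
    have hev' : ∀ᶠ x in nhdsWithin a (Ioi a), 0 < slope φ a x :=
      hev.filter_mono (nhdsWithin_mono a (fun x hx => ne_of_gt hx))
    have hmem : Ioo a b ∈ nhdsWithin a (Ioi a) := Ioo_mem_nhdsGT_of_mem ⟨le_refl a, hab⟩
    obtain ⟨x, hx1, hx2⟩ := (hev'.and (Filter.eventually_of_mem hmem (fun x hx => hx))).exists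
    refine ⟨x, hx2, ?_⟩
    rw [slope_def_field] at hx1
    have hxa : 0 < x - a := by linarith [hx2.1]
    rcases div_pos_iff.mp hx1 with ⟨h1, _⟩ | ⟨_, h2⟩
    · linarith
    · linarith
  -- main claim: deriv φ < 0 everywhere
  have hneg : ∀ ζ, deriv φ ζ < 0 := by
    by_contra hcon
    push_neg at hcon
    obtain ⟨c, hc⟩ := hcon
    -- get a point with strictly positive derivative
    obtain ⟨a, ha⟩ : ∃ a, 0 < deriv φ a := by
      rcases hc.lt_or_eq with h | h
      · exact ⟨c, h⟩
      · obtain ⟨ε, hε, hs⟩ := hsign c h.symm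
        have hne : c - ε / 2 ≠ c := by intro hh; linarith
        refine ⟨c - ε / 2, (hs _ hne ?_).1 (by linarith)⟩
        rw [abs_lt]; constructor <;> [linarith; linarith]
    -- find b > a with φ b < φ a
    have hev1 : ∀ᶠ x in atTop, φ x < φ a :=
      hlim_top.eventually (eventually_lt_nhds (hrange a).1)
    obtain ⟨b, hb1, hb2⟩ := (hev1.and (eventually_gt_atTop a)).exists
    -- maximum of φ on [a, b]
    obtain ⟨m, hmI, hmax⟩ := isCompact_Icc.exists_isMaxOn (Set.nonempty_Icc.mpr hb2.le)
      hφcont.continuousOn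
    have hmax' : ∀ x ∈ Icc a b, φ x ≤ φ m := hmax
    obtain ⟨x, hxI, hxa⟩ := hup a b hb2 ha
    have ham : a < m := by
      rcases hmI.1.lt_or_eq with h | h
      · exact h
      · exfalso
        have := hmax' x ⟨hxI.1.le, hxI.2.le⟩
        rw [← h] at this; linarith
    have hmb : m < b := by
      rcases hmI.2.lt_or_eq with h | h
      · exact h
      · exfalso
        have := hmax' a ⟨le_refl a, hb2.le⟩
        rw [h] at this; linarith
    have hgm : deriv φ m = 0 := by
      have hloc : IsLocalMax φ m :=
        Filter.eventually_of_mem (Icc_mem_nhds ham hmb) hmax'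
      exact hloc.deriv_eq_zero
    obtain ⟨ε, hε, hd⟩ := hdec m hgm
    -- m is a global strict maximum
    have hglob : ∀ z, z ≠ m → φ z < φ m := by
      intro z hz
      by_contra hcz
      push_neg at hcz
      rcases lt_or_gt_of_ne hz with hzm | hzm
      · -- z < m : minimum on [z, m] is interior
        obtain ⟨m', hm'I, hmin⟩ := isCompact_Icc.exists_isMinOn
          (Set.nonempty_Icc.mpr hzm.le) hφcont.continuousOn
        have hmin' : ∀ x ∈ Icc z m, φ m' ≤ φ x := hmin
        have hmz : 0 < m - z := by linarith
        have hminpos : 0 < min ε (m - z) := lt_min hε hmz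
        have hle1 : min ε (m - z) ≤ ε := min_le_left _ _
        have hle2 : min ε (m - z) ≤ m - z := min_le_right _ _
        set x₀ := m - min ε (m - z) / 2 with hx₀
        have hx₀m : x₀ < m := by rw [hx₀]; linarith
        have hx₀z : z ≤ x₀ := by rw [hx₀]; linarith
        have h1 : φ x₀ < φ m := by
          apply hd x₀ (ne_of_lt hx₀m)
          rw [hx₀, abs_lt]; constructor <;> linarith
        have h2 : φ m' ≤ φ x₀ := hmin' x₀ ⟨hx₀z, hx₀m.le⟩
        have hm'm : m' ≠ m := by intro h; rw [h] at h2; linarith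
        have hm'z : m' ≠ z := by
          intro h
          rw [h] at h2
          linarith
        exact hnomin z m m' ⟨hm'I.1.lt_of_ne (Ne.symm hm'z), hm'I.2.lt_of_ne hm'm⟩ hmin'
      · -- m < z : minimum on [m, z] is interior
        obtain ⟨m', hm'I, hmin⟩ := isCompact_Icc.exists_isMinOn
          (Set.nonempty_Icc.mpr hzm.le) hφcont.continuousOn
        have hmin' : ∀ x ∈ Icc m z, φ m' ≤ φ x := hmin
        have hmz : 0 < z - m := by linarith
        have hminpos : 0 < min ε (z - m) := lt_min hε hmz
        have hle1 : min ε (z - m) ≤ ε := min_le_left _ _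
        have hle2 : min ε (z - m) ≤ z - m := min_le_right _ _
        set x₀ := m + min ε (z - m) / 2 with hx₀
        have hx₀m : m < x₀ := by rw [hx₀]; linarith
        have hx₀z : x₀ ≤ z := by rw [hx₀]; linarith
        have h1 : φ x₀ < φ m := by
          apply hd x₀ (ne_of_gt hx₀m)
          rw [hx₀, abs_lt]; constructor <;> linarith
        have h2 : φ m' ≤ φ x₀ := hmin' x₀ ⟨hx₀m.le, hx₀z⟩
        have hm'm : m' ≠ m := by intro h; rw [h] at h2; linarith
        have hm'z : m' ≠ z := by
          intro h
          rw [h] at h2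
          linarith
        exact hnomin m z m' ⟨hm'I.1.lt_of_ne (Ne.symm hm'm), hm'I.2.lt_of_ne hm'z⟩ hmin'
    -- contradiction with the limit at -∞
    have hev2 : ∀ᶠ x in atBot, φ m < φ x :=
      hlim_bot.eventually (eventually_gt_nhds (hrange m).2)
    obtain ⟨z, hz1, hz2⟩ := (hev2.and (eventually_lt_atBot m)).exists
    exact absurd (hglob z (ne_of_lt hz2)) (not_lt.mpr hz1.le)
  exact ⟨strictAnti_of_deriv_neg hneg, hneg⟩
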